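/- arXiv:2105.00316 — 5 statements merged into one kernel-verified Lean document; each statement's English description precedes it below -/
import Mathlib

section
/- For any c > 0, the function f(x) = x · arctan(1/x^c) is concave on the interval [0,1] (with f(0) := 0). -/
open Real Set Filter

theorem mul_arctan_rpow_neg_concave (c : ℝ) (hc : 0 < c) :
    ConcaveOn ℝ (Set.Icc (0 : ℝ) 1)
      (fun x : ℝ => x * Real.arctan (x ^ (-c))) := by
  have hint : interior (Icc (0:ℝ) 1) = Ioo 0 1 := interior_Icc
  refine concaveOn_of_hasDerivWithinAt2_nonpos (f' := fun x =>
      arctan (x ^ (-c)) - c * x ^ c / ((x ^ c) ^ 2 + 1))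
    (f'' := fun x => -(c * x ^ c * x⁻¹) / (1 + (x ^ c) ^ 2)
      - c ^ 2 * x ^ c * x⁻¹ * (1 - (x ^ c) ^ 2) / ((x ^ c) ^ 2 + 1) ^ 2)
    (convex_Icc 0 1) ?_ ?_ ?_ ?_
  · -- continuity
    intro x hx
    rcases eq_or_lt_of_le hx.1 with h0 | h0
    · -- x = 0
      subst h0
      have h00 : (0:ℝ) * arctan ((0:ℝ) ^ (-c)) = 0 := by simp
      rw [ContinuousWithinAt, h00]
      have hg : Tendsto (fun t : ℝ => t * (π / 2)) (nhdsWithin 0 (Icc (0:ℝ) 1)) (nhds 0) := by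
        have h : ContinuousWithinAt (fun t : ℝ => t * (π / 2)) (Icc (0:ℝ) 1) 0 :=
          (continuous_id.mul continuous_const).continuousWithinAt
        simpa [ContinuousWithinAt] using h
      refine squeeze_zero' ?_ ?_ hg
      · filter_upwards [self_mem_nhdsWithin] with t ht
        have h := arctan_strictMono.monotone (rpow_nonneg ht.1 (-c))
        rw [arctan_zero] at h
        exact mul_nonneg ht.1 h
      · filter_upwards [self_mem_nhdsWithin] with t ht
        exact mul_le_mul_of_nonneg_left (arctan_lt_pi_div_two _).le ht.1
    · -- x > 0
      have : ContinuousAt (fun x : ℝ => x * arctan (x ^ (-c))) x := by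
        exact continuousAt_id.mul
          (Real.continuous_arctan.continuousAt.comp
            (Real.continuousAt_rpow_const x (-c) (Or.inl h0.ne')))
      exact this.continuousWithinAt
  · -- first derivative
    rw [hint]
    intro x hx
    have hx0 : (0:ℝ) < x := hx.1
    have ht0 : (0:ℝ) < x ^ c := rpow_pos_of_pos hx0 c
    have h1 : HasDerivAt (fun x : ℝ => x ^ (-c)) (-c * x ^ (-c - 1)) x :=
      Real.hasDerivAt_rpow_const (Or.inl hx0.ne')
    have h2 : HasDerivAt (fun x : ℝ => arctan (x ^ (-c)))
        (1 / (1 + (x ^ (-c)) ^ 2) * (-c * x ^ (-c - 1))) x :=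
      by have := (Real.hasDerivAt_arctan (x ^ (-c))).comp x h1; exact this
    have h3 : HasDerivAt (fun x : ℝ => x * arctan (x ^ (-c)))
        (1 * arctan (x ^ (-c)) + x * (1 / (1 + (x ^ (-c)) ^ 2) * (-c * x ^ (-c - 1)))) x :=
      (hasDerivAt_id x).mul h2
    refine (h3.congr_deriv ?_).hasDerivWithinAt
    have ha : x ^ (-c) = (x ^ c)⁻¹ := rpow_neg hx0.le c
    have hb : x ^ (-c - 1) = (x ^ c)⁻¹ * x⁻¹ := by
      rw [show -c - 1 = -c + -1 by ring, rpow_add hx0, rpow_neg_one, ha]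
    have hd1 : (1:ℝ) + ((x ^ c)⁻¹) ^ 2 ≠ 0 := by positivity
    have hd2 : (x ^ c) ^ 2 + 1 ≠ 0 := by positivity
    rw [ha, hb]
    field_simp
    ring_nf
  · -- second derivative
    rw [hint]
    intro x hx
    have hx0 : (0:ℝ) < x := hx.1
    have ht0 : (0:ℝ) < x ^ c := rpow_pos_of_pos hx0 c
    have hd2 : (x ^ c) ^ 2 + 1 ≠ 0 := by positivity
    have h1 : HasDerivAt (fun x : ℝ => x ^ (-c)) (-c * x ^ (-c - 1)) x :=
      Real.hasDerivAt_rpow_const (Or.inl hx0.ne')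
    have h2 : HasDerivAt (fun x : ℝ => arctan (x ^ (-c)))
        (1 / (1 + (x ^ (-c)) ^ 2) * (-c * x ^ (-c - 1))) x :=
      by have := (Real.hasDerivAt_arctan (x ^ (-c))).comp x h1; exact this
    have hu : HasDerivAt (fun x : ℝ => x ^ c) (c * x ^ (c - 1)) x :=
      Real.hasDerivAt_rpow_const (Or.inl hx0.ne')
    have hN : HasDerivAt (fun x : ℝ => c * x ^ c) (c * (c * x ^ (c - 1))) x :=
      hu.const_mul c
    have hD : HasDerivAt (fun x : ℝ => (x ^ c) ^ 2 + 1)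
        ((2 : ℕ) * (x ^ c) ^ 1 * (c * x ^ (c - 1))) x := (hu.pow 2).add_const 1
    have hdiv := hN.div hD hd2
    have h4 := h2.sub hdiv
    refine (h4.congr_deriv ?_).hasDerivWithinAt
    have ha : x ^ (-c) = (x ^ c)⁻¹ := rpow_neg hx0.le c
    have hb : x ^ (-c - 1) = (x ^ c)⁻¹ * x⁻¹ := by
      rw [show -c - 1 = -c + -1 by ring, rpow_add hx0, rpow_neg_one, ha]
    have hcm : x ^ (c - 1) = x ^ c * x⁻¹ := by
      rw [show c - 1 = c + -1 by ring, rpow_add hx0, rpow_neg_one]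
    have hd1 : (1:ℝ) + ((x ^ c)⁻¹) ^ 2 ≠ 0 := by positivity
    rw [ha, hb, hcm]
    push_cast
    field_simp
    ring
  · -- nonpositivity
    rw [hint]
    intro x hx
    have hx0 : (0:ℝ) < x := hx.1
    have ht0 : (0:ℝ) < x ^ c := rpow_pos_of_pos hx0 c
    have ht1 : x ^ c ≤ 1 := rpow_le_one hx0.le hx.2.le hc.le
    have hA : (0:ℝ) ≤ c * x ^ c * x⁻¹ / (1 + (x ^ c) ^ 2) := by positivity
    have hB : (0:ℝ) ≤ c ^ 2 * x ^ c * x⁻¹ * (1 - (x ^ c) ^ 2) / ((x ^ c) ^ 2 + 1) ^ 2 := by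
      have : (0:ℝ) ≤ 1 - (x ^ c) ^ 2 := by nlinarith
      positivity
    have heq : -(c * x ^ c * x⁻¹) / (1 + (x ^ c) ^ 2)
        = -(c * x ^ c * x⁻¹ / (1 + (x ^ c) ^ 2)) := by ring
    rw [heq]
    linarith
end

section
/- For any probability vector p = (p₁,…,pₙ) and any c > 0, the t-entropy H_c(p) = Σᵢ pᵢ · arctan(1/pᵢ^c) − π/4 is nonnegative (with the convention that terms with pᵢ = 0 contribute 0). -/
open Real

/-- The t-entropy of a (generalized) probability vector, with the convention
that a summand with `p i = 0` contributes `0` (automatic since `0 ^ (-c) = 0`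
for `c > 0` and `0 * _ = 0`). -/
noncomputable def tEntropy {n : ℕ} (c : ℝ) (p : Fin n → ℝ) : ℝ :=
  (∑ i, p i * Real.arctan ((p i) ^ (-c))) - Real.pi / 4

theorem tEntropy_nonneg {n : ℕ} (c : ℝ) (hc : 0 < c) (p : Fin n → ℝ)
    (hp : ∀ i, 0 ≤ p i) (hsum : ∑ i, p i = 1) :
    0 ≤ tEntropy c p := by
  have hle1 : ∀ i, p i ≤ 1 := by
    intro i
    rw [← hsum]
    exact Finset.single_le_sum (fun j _ => hp j) (Finset.mem_univ i)
  have key : ∀ i, p i * (Real.pi / 4) ≤ p i * Real.arctan ((p i) ^ (-c)) := by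
    intro i
    rcases eq_or_lt_of_le (hp i) with h0 | h0
    · simp [← h0]
    · apply mul_le_mul_of_nonneg_left _ (hp i)
      have h1 : (1 : ℝ) ≤ (p i) ^ (-c) :=
        Real.one_le_rpow_of_pos_of_le_one_of_nonpos h0 (hle1 i) (by linarith)
      calc Real.pi / 4 = Real.arctan 1 := Real.arctan_one.symm
        _ ≤ Real.arctan ((p i) ^ (-c)) := Real.arctan_strictMono.monotone h1
  have : Real.pi / 4 ≤ ∑ i, p i * Real.arctan ((p i) ^ (-c)) := by
    calc Real.pi / 4 = ∑ i, p i * (Real.pi / 4) := by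
          rw [← Finset.sum_mul, hsum, one_mul]
      _ ≤ _ := Finset.sum_le_sum (fun i _ => key i)
  unfold tEntropy
  linarith
end

section
/- For any c > 0 and any n ≥ 1, the t-entropy H_c over probability vectors of length n is maximized at the uniform vector: for every probability vector p = (p₁,…,pₙ), H_c(p) ≤ H_c(1/n,…,1/n) = arctan(n^c) − π/4. -/
open Real

open Set

noncomputable def tf (c : ℝ) (x : ℝ) : ℝ := x * Real.arctan (x ^ (-c))
noncomputable def tf' (c : ℝ) (x : ℝ) : ℝ :=
  Real.arctan (x ^ (-c)) - c * x ^ (-c) / (1 + (x ^ (-c)) ^ 2)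

lemma hasDerivAt_tf {c x : ℝ} (hc : 0 < c) (hx : 0 < x) :
    HasDerivAt (tf c) (tf' c x) x := by
  have hu : HasDerivAt (fun y : ℝ => y ^ (-c)) (-c * x ^ (-c - 1)) x :=
    Real.hasDerivAt_rpow_const (Or.inl hx.ne')
  have ha : HasDerivAt (fun y : ℝ => Real.arctan (y ^ (-c)))
      (1 / (1 + (x ^ (-c)) ^ 2) * (-c * x ^ (-c - 1))) x :=
    HasDerivAt.comp (h₂ := Real.arctan) x (Real.hasDerivAt_arctan (x ^ (-c))) hu
  have h : HasDerivAt (tf c)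
      (1 * Real.arctan (x ^ (-c)) + id x * (1 / (1 + (x ^ (-c)) ^ 2) * (-c * x ^ (-c - 1)))) x :=
    (hasDerivAt_id x).mul ha
  have hxx : x * x ^ (-c - 1) = x ^ (-c) := by
    nth_rewrite 1 [← Real.rpow_one x]
    rw [← Real.rpow_add hx]; norm_num
  convert h using 1
  unfold tf'
  have h2 : (0:ℝ) < 1 + (x ^ (-c)) ^ 2 := by positivity
  rw [id_eq, one_mul]
  have e : x * (1 / (1 + (x ^ (-c)) ^ 2) * (-c * x ^ (-c - 1)))
      = -(c * (x * x ^ (-c - 1)) / (1 + (x ^ (-c)) ^ 2)) := by ring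
  rw [e, hxx]; ring

noncomputable def tf'' (c : ℝ) (x : ℝ) : ℝ :=
  (-c * x ^ (-c - 1)) * ((1 + (x ^ (-c)) ^ 2) - c * (1 - (x ^ (-c)) ^ 2)) / (1 + (x ^ (-c)) ^ 2) ^ 2

lemma hasDerivAt_tf' {c x : ℝ} (hc : 0 < c) (hx : 0 < x) :
    HasDerivAt (tf' c) (tf'' c x) x := by
  set u := x ^ (-c) with hu_def
  have hu : HasDerivAt (fun y : ℝ => y ^ (-c)) (-c * x ^ (-c - 1)) x :=
    Real.hasDerivAt_rpow_const (Or.inl hx.ne')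
  have ha : HasDerivAt (fun y : ℝ => Real.arctan (y ^ (-c)))
      (1 / (1 + u ^ 2) * (-c * x ^ (-c - 1))) x :=
    HasDerivAt.comp (h₂ := Real.arctan) x (Real.hasDerivAt_arctan u) hu
  have hden : (0:ℝ) < 1 + u ^ 2 := by positivity
  have hnum : HasDerivAt (fun y : ℝ => c * y ^ (-c)) (c * (-c * x ^ (-c - 1))) x :=
    hu.const_mul c
  have hden' : HasDerivAt (fun y : ℝ => 1 + (y ^ (-c)) ^ 2)
      (2 * u * (-c * x ^ (-c - 1))) x := by
    have : HasDerivAt (fun y : ℝ => 1 + (y ^ (-c)) ^ 2)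
        (((2:ℕ):ℝ) * (x ^ (-c)) ^ (2 - 1) * (-c * x ^ (-c - 1))) x := (hu.pow 2).const_add 1
    convert this using 1
    push_cast; ring
  have hq : HasDerivAt (fun y : ℝ => c * y ^ (-c) / (1 + (y ^ (-c)) ^ 2))
      ((c * (-c * x ^ (-c - 1)) * (1 + u ^ 2) - c * u * (2 * u * (-c * x ^ (-c - 1)))) /
        (1 + u ^ 2) ^ 2) x := hnum.div hden' hden.ne'
  have h : HasDerivAt (tf' c)
      (1 / (1 + u ^ 2) * (-c * x ^ (-c - 1)) -
        (c * (-c * x ^ (-c - 1)) * (1 + u ^ 2) - c * u * (2 * u * (-c * x ^ (-c - 1)))) /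
          (1 + u ^ 2) ^ 2) x := ha.sub hq
  convert h using 1
  unfold tf''
  field_simp
  ring

lemma tf''_nonpos {c x : ℝ} (hc : 0 < c) (hx : 0 < x) (hx1 : x ≤ 1) : tf'' c x ≤ 0 := by
  unfold tf''
  have hu1 : (1:ℝ) ≤ x ^ (-c) :=
    Real.one_le_rpow_of_pos_of_le_one_of_nonpos hx hx1 (by linarith)
  have hup : (0:ℝ) < x ^ (-c - 1) := Real.rpow_pos_of_pos hx _
  have hden : (0:ℝ) < 1 + (x ^ (-c)) ^ 2 := by positivity
  apply div_nonpos_of_nonpos_of_nonneg _ (by positivity)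
  apply mul_nonpos_of_nonpos_of_nonneg (by nlinarith)
  have h2 : (1:ℝ) ≤ (x ^ (-c)) ^ 2 := by nlinarith
  nlinarith [mul_nonneg hc.le (by linarith : (0:ℝ) ≤ (x ^ (-c)) ^ 2 - 1)]

lemma tf_contOn {c : ℝ} (hc : 0 < c) : ContinuousOn (tf c) (Icc 0 1) := by
  intro x hx
  rcases eq_or_lt_of_le hx.1 with h0 | h0
  · rw [ContinuousWithinAt, ← h0]
    have h00 : tf c 0 = 0 := by
      simp [tf, Real.zero_rpow (by linarith : -c ≠ 0)]
    rw [h00]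
    apply squeeze_zero' (g := fun y => y * (Real.pi / 2))
    · filter_upwards [self_mem_nhdsWithin] with y hy
      exact mul_nonneg hy.1 ((by rw [← Real.arctan_zero]; exact Real.arctan_strictMono.monotone (Real.rpow_nonneg hy.1 _)))
    · filter_upwards [self_mem_nhdsWithin] with y hy
      exact mul_le_mul_of_nonneg_left ((Real.arctan_lt_pi_div_two _).le) hy.1
    · have : Filter.Tendsto (fun y : ℝ => y * (Real.pi / 2)) (nhds 0) (nhds 0) := by
        have h : Filter.Tendsto (fun y : ℝ => y) (nhds 0) (nhds 0) :=
          Filter.tendsto_id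
        simpa using h.mul (tendsto_const_nhds (x := Real.pi / 2))
      exact this.mono_left nhdsWithin_le_nhds
  · exact (hasDerivAt_tf hc h0).continuousAt.continuousWithinAt

lemma tf_concave {c : ℝ} (hc : 0 < c) : ConcaveOn ℝ (Icc 0 1) (tf c) := by
  apply concaveOn_of_hasDerivWithinAt2_nonpos (convex_Icc 0 1) (tf_contOn hc)
    (f' := tf' c) (f'' := tf'' c)
  · intro x hx
    rw [interior_Icc] at hx
    exact (hasDerivAt_tf hc hx.1).hasDerivWithinAt
  · intro x hx
    rw [interior_Icc] at hx
    exact (hasDerivAt_tf' hc hx.1).hasDerivWithinAt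
  · intro x hx
    rw [interior_Icc] at hx
    exact tf''_nonpos hc hx.1 hx.2.le


theorem tEntropy_le_uniform {n : ℕ} (hn : 1 ≤ n) (c : ℝ) (hc : 0 < c)
    (p : Fin n → ℝ) (hp : ∀ i, 0 ≤ p i) (hsum : ∑ i, p i = 1) :
    tEntropy c p ≤ tEntropy c (fun _ : Fin n => (1 : ℝ) / n) ∧
    tEntropy c (fun _ : Fin n => (1 : ℝ) / n) =
      Real.arctan ((n : ℝ) ^ c) - Real.pi / 4 := by
  have hn0 : (0:ℝ) < n := by exact_mod_cast hn
  have huv : ((1:ℝ)/n) ^ (-c) = (n:ℝ) ^ c := by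
    rw [one_div, Real.inv_rpow (Nat.cast_nonneg n), Real.rpow_neg (Nat.cast_nonneg n), inv_inv]
  have huni : tEntropy c (fun _ : Fin n => (1 : ℝ) / n) =
      Real.arctan ((n : ℝ) ^ c) - Real.pi / 4 := by
    unfold tEntropy
    simp only [huv]
    rw [Finset.sum_const, Finset.card_univ, Fintype.card_fin, nsmul_eq_mul]
    field_simp
  refine ⟨?_, huni⟩
  have hmem : ∀ i ∈ Finset.univ, p i ∈ Icc (0:ℝ) 1 := by
    intro i _
    refine ⟨hp i, ?_⟩
    calc p i ≤ ∑ j, p j := Finset.single_le_sum (fun j _ => hp j) (Finset.mem_univ i)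
    _ = 1 := hsum
  have hw : ∑ _i : Fin n, (1:ℝ)/n = 1 := by
    rw [Finset.sum_const, Finset.card_univ, Fintype.card_fin, nsmul_eq_mul]
    field_simp
  have hjensen := (tf_concave hc).le_map_sum (t := Finset.univ)
    (w := fun _ : Fin n => (1:ℝ)/n) (p := p)
    (fun i _ => by positivity) hw hmem
  have hsum2 : ∑ i, ((1:ℝ)/n) • p i = (1:ℝ)/n := by
    simp only [smul_eq_mul, ← Finset.mul_sum, hsum, mul_one]
  rw [hsum2] at hjensen
  simp only [smul_eq_mul] at hjensen
  have hkey : ∑ i, tf c (p i) ≤ (n:ℝ) * tf c ((1:ℝ)/n) := by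
    have := mul_le_mul_of_nonneg_left hjensen hn0.le
    calc ∑ i, tf c (p i) = (n:ℝ) * ∑ i, ((1:ℝ)/n) * tf c (p i) := by
          rw [← Finset.mul_sum, ← mul_assoc]; field_simp
    _ ≤ (n:ℝ) * tf c ((1:ℝ)/n) := this
  have hval : (n:ℝ) * tf c ((1:ℝ)/n) = Real.arctan ((n:ℝ) ^ c) := by
    unfold tf
    rw [huv, ← mul_assoc]
    field_simp
  have hgoal : tEntropy c p = (∑ i, tf c (p i)) - Real.pi/4 := rfl
  rw [hgoal, huni]
  linarith [hkey, hval]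
end

section
/- The t-entropy H_c is a concave function on the simplex: for probability vectors p, q of the same length, any λ ∈ [0,1], and any c > 0, H_c(λp + (1-λ)q) ≥ λ H_c(p) + (1-λ) H_c(q). -/
open Real

/-- The auxiliary function `g(t) = arctan t - c t / (1 + t²)`. -/
noncomputable def tGaux (c : ℝ) : ℝ → ℝ := fun t => Real.arctan t - c * t / (1 + t ^ 2)

lemma tGaux_hasDerivAt (c t : ℝ) :
    HasDerivAt (tGaux c) (1 / (1 + t ^ 2) - (c * (1 + t ^ 2) - c * t * (2 * t)) / (1 + t ^ 2) ^ 2)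
      t := by
  have hd : (1 + t ^ 2) ≠ 0 := by positivity
  have h1 : HasDerivAt (fun t : ℝ => c * t) c t := by
    simpa using (hasDerivAt_id t).const_mul c
  have h2 : HasDerivAt (fun t : ℝ => 1 + t ^ 2) (2 * t) t := by
    simpa using (hasDerivAt_pow 2 t).const_add 1
  exact (Real.hasDerivAt_arctan t).sub (h1.div h2 hd)

lemma tGaux_monotoneOn (c : ℝ) (hc : 0 ≤ c) : MonotoneOn (tGaux c) (Set.Ici 1) := by
  have hcont : ContinuousOn (tGaux c) (Set.Ici 1) := by
    apply ContinuousOn.sub Real.continuous_arctan.continuousOn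
    exact ContinuousOn.div (continuous_const.mul continuous_id).continuousOn
      (continuous_const.add (continuous_pow 2)).continuousOn (fun t _ => by positivity)
  refine monotoneOn_of_deriv_nonneg (convex_Ici 1) hcont ?_ ?_
  · intro t _
    exact (tGaux_hasDerivAt c t).differentiableAt.differentiableWithinAt
  · intro t ht
    rw [interior_Ici] at ht
    rw [(tGaux_hasDerivAt c t).deriv]
    have ht1 : 1 < t := ht
    have hd : (0:ℝ) < 1 + t ^ 2 := by positivity
    rw [div_sub_div _ _ (ne_of_gt hd) (by positivity)]
    apply div_nonneg _ (by positivity)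
    have h1 : 0 ≤ (1 + t ^ 2) - c * (1 - t ^ 2) := by
      nlinarith [mul_nonneg hc (by nlinarith : (0:ℝ) ≤ t ^ 2 - 1)]
    nlinarith [mul_nonneg hd.le h1]

lemma tF_hasDerivAt (c : ℝ) {x : ℝ} (hx : 0 < x) :
    HasDerivAt (fun x : ℝ => x * Real.arctan (x ^ (-c))) (tGaux c (x ^ (-c))) x := by
  have hr : HasDerivAt (fun x : ℝ => x ^ (-c)) (-c * x ^ (-c - 1)) x :=
    Real.hasDerivAt_rpow_const (Or.inl hx.ne')
  have ha : HasDerivAt (fun x : ℝ => Real.arctan (x ^ (-c)))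
      (1 / (1 + (x ^ (-c)) ^ 2) * (-c * x ^ (-c - 1))) x :=
    hr.arctan
  have h : HasDerivAt (fun y : ℝ => y * Real.arctan (y ^ (-c)))
      (1 * Real.arctan (x ^ (-c)) + id x * (1 / (1 + (x ^ (-c)) ^ 2) * (-c * x ^ (-c - 1)))) x :=
    (hasDerivAt_id x).mul ha
  have hxx : x * x ^ (-c - 1) = x ^ (-c) := by
    nth_rewrite 1 [← Real.rpow_one x]
    rw [← Real.rpow_add hx]
    norm_num
  convert h using 1
  show Real.arctan (x ^ (-c)) - c * x ^ (-c) / (1 + (x ^ (-c)) ^ 2) =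
    1 * Real.arctan (x ^ (-c)) + x * (1 / (1 + (x ^ (-c)) ^ 2) * (-c * x ^ (-c - 1)))
  field_simp
  rw [← hxx]
  ring

lemma tF_concaveOn (c : ℝ) (hc : 0 < c) :
    ConcaveOn ℝ (Set.Icc (0:ℝ) 1) (fun x : ℝ => x * Real.arctan (x ^ (-c))) := by
  set f : ℝ → ℝ := fun x => x * Real.arctan (x ^ (-c)) with hf
  have hcont : ContinuousOn f (Set.Icc 0 1) := by
    intro x hx
    rcases eq_or_lt_of_le hx.1 with h0 | h0
    · -- x = 0 : squeeze
      subst h0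
      have hf0 : f 0 = 0 := by simp [hf]
      rw [ContinuousWithinAt, hf0]
      have h1 : ∀ y ∈ Set.Icc (0:ℝ) 1, 0 ≤ f y := by
        intro y hy
        refine mul_nonneg hy.1 ?_
        rw [← Real.arctan_zero]
        exact Real.arctan_strictMono.monotone (Real.rpow_nonneg hy.1 _)
      have h2 : ∀ y ∈ Set.Icc (0:ℝ) 1, f y ≤ y * (Real.pi / 2) := by
        intro y hy
        exact mul_le_mul_of_nonneg_left (Real.arctan_lt_pi_div_two _).le hy.1
      have h3 : Filter.Tendsto (fun y : ℝ => y * (Real.pi / 2))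
          (nhdsWithin 0 (Set.Icc 0 1)) (nhds 0) := by
        have : Filter.Tendsto (fun y : ℝ => y * (Real.pi / 2)) (nhds 0)
            (nhds (0 * (Real.pi / 2))) :=
          (continuous_id.mul continuous_const).tendsto 0
        simpa using this.mono_left nhdsWithin_le_nhds
      exact squeeze_zero' (Filter.eventually_of_mem self_mem_nhdsWithin h1)
        (Filter.eventually_of_mem self_mem_nhdsWithin h2) h3
    · refine ContinuousAt.continuousWithinAt ?_
      exact continuousAt_id.mul ((Real.continuous_arctan.continuousAt).comp
        (Real.continuousAt_rpow_const x (-c) (Or.inl h0.ne')))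
  have hderiv : ∀ x ∈ Set.Ioo (0:ℝ) 1, deriv f x = tGaux c (x ^ (-c)) := by
    intro x hx
    exact (tF_hasDerivAt c hx.1).deriv
  refine AntitoneOn.concaveOn_of_deriv (convex_Icc 0 1) hcont ?_ ?_
  · rw [interior_Icc]
    intro x hx
    exact (tF_hasDerivAt c hx.1).differentiableAt.differentiableWithinAt
  · rw [interior_Icc]
    intro x hx y hy hxy
    rw [hderiv x hx, hderiv y hy]
    have hx1 : 1 ≤ x ^ (-c) :=
      Real.one_le_rpow_of_pos_of_le_one_of_nonpos hx.1 hx.2.le (by linarith)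
    have hy1 : 1 ≤ y ^ (-c) :=
      Real.one_le_rpow_of_pos_of_le_one_of_nonpos hy.1 hy.2.le (by linarith)
    have hle : y ^ (-c) ≤ x ^ (-c) :=
      Real.rpow_le_rpow_of_nonpos hx.1 hxy (by linarith)
    exact tGaux_monotoneOn c hc.le hy1 hx1 hle

theorem tEntropy_concave_on_simplex {n : ℕ} (c : ℝ) (hc : 0 < c)
    (p q : Fin n → ℝ) (hp : ∀ i, 0 ≤ p i) (hpsum : ∑ i, p i = 1)
    (hq : ∀ i, 0 ≤ q i) (hqsum : ∑ i, q i = 1)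
    (l : ℝ) (hl0 : 0 ≤ l) (hl1 : l ≤ 1) :
    l * tEntropy c p + (1 - l) * tEntropy c q ≤
      tEntropy c (fun i => l * p i + (1 - l) * q i) := by
  have hp1 : ∀ i, p i ≤ 1 := by
    intro i
    rw [← hpsum]
    exact Finset.single_le_sum (fun j _ => hp j) (Finset.mem_univ i)
  have hq1 : ∀ i, q i ≤ 1 := by
    intro i
    rw [← hqsum]
    exact Finset.single_le_sum (fun j _ => hq j) (Finset.mem_univ i)
  have hconc := tF_concaveOn c hc
  have key : ∀ i, l * (p i * Real.arctan ((p i) ^ (-c)))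
      + (1 - l) * (q i * Real.arctan ((q i) ^ (-c)))
      ≤ (l * p i + (1 - l) * q i) *
        Real.arctan ((l * p i + (1 - l) * q i) ^ (-c)) := by
    intro i
    have := hconc.2 (Set.mem_Icc.mpr ⟨hp i, hp1 i⟩) (Set.mem_Icc.mpr ⟨hq i, hq1 i⟩)
      hl0 (by linarith : (0:ℝ) ≤ 1 - l) (by ring)
    simpa [smul_eq_mul] using this
  simp only [tEntropy]
  have hsum : ∑ i, (l * (p i * Real.arctan ((p i) ^ (-c)))
      + (1 - l) * (q i * Real.arctan ((q i) ^ (-c))))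
      ≤ ∑ i, (l * p i + (1 - l) * q i) *
        Real.arctan ((l * p i + (1 - l) * q i) ^ (-c)) :=
    Finset.sum_le_sum (fun i _ => key i)
  rw [Finset.sum_add_distrib, ← Finset.mul_sum, ← Finset.mul_sum] at hsum
  linarith
end

section
/- For every ε ∈ (0, 1/2), the inequality επ/2 + (1−ε)·arctan(1−ε) < (1−ε)·π/2 + ε·arctan(ε) holds. -/
open Real

lemma arctan_lower_bound {x : ℝ} (hx : 0 < x) : x / (1 + x ^ 2) < Real.arctan x := by
  have key : StrictMonoOn (fun t : ℝ => Real.arctan t - t / (1 + t ^ 2)) (Set.Ici 0) := by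
    apply strictMonoOn_of_deriv_pos (convex_Ici 0)
    · apply Continuous.continuousOn
      exact Real.continuous_arctan.sub (continuous_id.div (by continuity) (fun t => by positivity))
    · intro t ht
      rw [interior_Ici] at ht
      have ht0 : (0:ℝ) < t := ht
      have h1 : (0:ℝ) < 1 + t ^ 2 := by positivity
      have hd : HasDerivAt (fun t : ℝ => Real.arctan t - t / (1 + t ^ 2))
          (1 / (1 + t ^ 2) - ((1 : ℝ) * (1 + t ^ 2) - t * (↑2 * t ^ (2 - 1))) / (1 + t ^ 2) ^ 2) t := by
        exact (Real.hasDerivAt_arctan t).sub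
          ((hasDerivAt_id t).div ((hasDerivAt_pow 2 t).const_add 1) h1.ne')
      rw [hd.deriv]
      rw [div_sub_div _ _ h1.ne' (by positivity)]
      apply div_pos _ (by positivity)
      norm_num
      nlinarith [sq_nonneg t, sq_nonneg (t*t)]
  have := key (Set.self_mem_Ici) (Set.mem_Ici.mpr hx.le) hx
  simpa using this

lemma key_mono : StrictMonoOn (fun t : ℝ => t * Real.arctan t⁻¹) (Set.Ioi 0) := by
  apply strictMonoOn_of_deriv_pos (convex_Ioi 0)
  · apply ContinuousOn.mul continuousOn_id
    exact Real.continuous_arctan.comp_continuousOn (continuousOn_inv₀.mono (by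
      intro x hx; exact ne_of_gt hx))
  · intro t ht
    rw [interior_Ioi] at ht
    have ht0 : (0:ℝ) < t := ht
    have h1 : (0:ℝ) < 1 + t⁻¹ ^ 2 := by positivity
    have hd : HasDerivAt (fun t : ℝ => t * Real.arctan t⁻¹)
        (1 * Real.arctan t⁻¹ + t * (1 / (1 + t⁻¹ ^ 2) * (-(t ^ 2)⁻¹))) t := by
      exact (hasDerivAt_id t).mul
        ((Real.hasDerivAt_arctan t⁻¹).comp t (hasDerivAt_inv ht0.ne'))
    rw [hd.deriv]
    have hlb : t⁻¹ / (1 + t⁻¹ ^ 2) < Real.arctan t⁻¹ := arctan_lower_bound (by positivity)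
    have hsimp : t⁻¹ / (1 + t⁻¹ ^ 2) = t / (t ^ 2 + 1) := by
      field_simp
    rw [hsimp] at hlb
    have h2 : t * (1 / (1 + t⁻¹ ^ 2) * (-(t ^ 2)⁻¹)) = -(t / (t ^ 2 + 1)) := by
      field_simp
    rw [h2, one_mul]
    linarith

theorem breakdown_inequality (ε : ℝ) (h0 : 0 < ε) (h1 : ε < 1 / 2) :
    ε * Real.pi / 2 + (1 - ε) * Real.arctan (1 - ε) <
      (1 - ε) * Real.pi / 2 + ε * Real.arctan ε := by
  have hε' : (0:ℝ) < 1 - ε := by linarith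
  have h2 := key_mono (Set.mem_Ioi.mpr h0) (Set.mem_Ioi.mpr hε') (by linarith)
  simp only at h2
  rw [Real.arctan_inv_of_pos h0, Real.arctan_inv_of_pos hε'] at h2
  nlinarith [h2]
end
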